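/- Let Hb be a real Hilbert space, S a measurable space, φ : S → Hb strongly measurable, and P_x, P_y, P_z probability measures on S such that x ↦ ‖φ(x)‖ is square-integrable with respect to each of them. Set μ_x := ∫ φ dP_x, μ_y := ∫ φ dP_y, μ_z := ∫ φ dP_z. Let (x, y, z) have law P_x ⊗ P_y ⊗ P_z and define D := (⟪φ(y),μ_y⟫ − ⟪φ(x),μ_y⟫ − ⟪μ_x,φ(y)⟫) − (⟪φ(z),μ_z⟫ − ⟪φ(x),μ_z⟫ − ⟪μ_x,φ(z)⟫). Then Var(D) = Var(⟪φ(y),μ_y⟫) + Var(⟪φ(x),μ_y⟫) + Var(⟪μ_x,φ(y)⟫) + Var(⟪φ(z),μ_z⟫) + Var(⟪φ(x),μ_z⟫) + Var(⟪μ_x,φ(z)⟫) − 2 Cov(⟪φ(y),μ_y⟫, ⟪μ_x,φ(y)⟫) − 2 Cov(⟪φ(x),μ_y⟫, ⟪φ(x),μ_z⟫) − 2 Cov(⟪φ(z),μ_z⟫, ⟪μ_x,φ(z)⟫), where all variances and covariances are taken under (x,y,z) ∼ P_x ⊗ P_y ⊗ P_z. -/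

import Mathlib

open MeasureTheory ProbabilityTheory
open scoped RealInnerProductSpace

section MMDVarAux

variable {α β γ : Type*} [MeasurableSpace α] [MeasurableSpace β] [MeasurableSpace γ]

lemma aux_mul_integrable {μ : Measure α} {u v : α → ℝ}
    (hu : MemLp u 2 μ) (hv : MemLp v 2 μ) :
    Integrable (fun x => u x * v x) μ := by
  have h := (((hu.add hv).integrable_sq).sub hu.integrable_sq).sub hv.integrable_sq
  have h2 : (fun x => u x * v x) = fun x => (((u x + v x) ^ 2 - u x ^ 2) - v x ^ 2) / 2 := by
    funext x; ring
  rw [h2]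
  exact h.div_const 2

lemma aux_mp_fst (μa : Measure α) (μb : Measure β) [SFinite μa] [IsProbabilityMeasure μb] :
    MeasurePreserving (Prod.fst : α × β → α) (μa.prod μb) μa :=
  ⟨measurable_fst, by simp⟩

lemma aux_mp_snd (μa : Measure α) (μb : Measure β) [IsProbabilityMeasure μa] [SFinite μb] :
    MeasurePreserving (Prod.snd : α × β → β) (μa.prod μb) μb :=
  ⟨measurable_snd, by simp⟩

lemma aux_int_fst (μa : Measure α) (μb : Measure β) [SFinite μa] [SFinite μb]
    [IsProbabilityMeasure μb] (f : α → ℝ) :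
    ∫ w, f w.1 ∂(μa.prod μb) = ∫ a, f a ∂μa := by
  rw [integral_fun_fst]; simp

lemma aux_int_snd (μa : Measure α) (μb : Measure β) [SFinite μa] [SFinite μb]
    [IsProbabilityMeasure μa] (f : β → ℝ) :
    ∫ w, f w.2 ∂(μa.prod μb) = ∫ b, f b ∂μb := by
  rw [integral_fun_snd]; simp

lemma aux_centered {ν : Measure α} [IsProbabilityMeasure ν] {u v : α → ℝ}
    (hu : Integrable u ν) (hv : Integrable v ν) :
    ∫ s, ((u s - ∫ t, u t ∂ν) - (v s - ∫ t, v t ∂ν)) ∂ν = 0 := by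
  have hu' : Integrable (fun s => u s - ∫ t, u t ∂ν) ν := hu.sub (integrable_const _)
  have hv' : Integrable (fun s => v s - ∫ t, v t ∂ν) ν := hv.sub (integrable_const _)
  rw [integral_sub hu' hv', integral_sub hu (integrable_const _),
      integral_sub hv (integrable_const _), integral_const]
  simp

lemma aux_sub_sq {ν : Measure α} (u v : α → ℝ) (hu : MemLp u 2 ν) (hv : MemLp v 2 ν) :
    ∫ s, (u s - v s) ^ 2 ∂ν
      = ∫ s, u s ^ 2 ∂ν + ∫ s, v s ^ 2 ∂ν - 2 * ∫ s, u s * v s ∂ν := by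
  have h : (fun s => (u s - v s) ^ 2)
      = fun s => u s ^ 2 + v s ^ 2 - 2 * (u s * v s) := by funext s; ring
  have h1 : Integrable (fun s => u s ^ 2 + v s ^ 2) ν := hu.integrable_sq.add hv.integrable_sq
  rw [h, integral_sub h1 ((aux_mul_integrable hu hv).const_mul 2),
      integral_add hu.integrable_sq hv.integrable_sq, integral_const_mul]

lemma aux_memLp_inner {Hb : Type*} [NormedAddCommGroup Hb] [InnerProductSpace ℝ Hb]
    {φ : α → Hb} (hφ : StronglyMeasurable φ) (c : Hb)
    {ν : Measure α} (hν : MemLp (fun a => ‖φ a‖) 2 ν) :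
    MemLp (fun s => ⟪φ s, c⟫) 2 ν := by
  refine MemLp.of_le (hν.const_mul ‖c‖)
    (hφ.inner stronglyMeasurable_const).aestronglyMeasurable
    (ae_of_all _ fun s => ?_)
  rw [Real.norm_eq_abs, Real.norm_eq_abs]
  refine le_trans (abs_real_inner_le_norm _ _) ?_
  rw [mul_comm]
  exact le_abs_self _

lemma aux_memLp_inner' {Hb : Type*} [NormedAddCommGroup Hb] [InnerProductSpace ℝ Hb]
    {φ : α → Hb} (hφ : StronglyMeasurable φ) (c : Hb)
    {ν : Measure α} (hν : MemLp (fun a => ‖φ a‖) 2 ν) :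
    MemLp (fun s => ⟪c, φ s⟫) 2 ν := by
  have h := aux_memLp_inner hφ c hν
  exact (memLp_congr_ae (ae_of_all _ fun s => real_inner_comm (φ s) c)).mpr h

lemma aux_sq_sum (Pa : Measure α) (Pb : Measure β) (Pc : Measure γ)
    [IsProbabilityMeasure Pa] [IsProbabilityMeasure Pb] [IsProbabilityMeasure Pc]
    (Q : α → ℝ) (P : β → ℝ) (R : γ → ℝ)
    (hQ : MemLp Q 2 Pa) (hP : MemLp P 2 Pb) (hR : MemLp R 2 Pc)
    (hQ0 : ∫ a, Q a ∂Pa = 0) (hP0 : ∫ b, P b ∂Pb = 0) (hR0 : ∫ c, R c ∂Pc = 0) :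
    ∫ w : α × β × γ, (Q w.1 + P w.2.1 + R w.2.2) ^ 2 ∂(Pa.prod (Pb.prod Pc))
      = ∫ a, Q a ^ 2 ∂Pa + ∫ b, P b ^ 2 ∂Pb + ∫ c, R c ^ 2 ∂Pc := by
  set μ := Pa.prod (Pb.prod Pc) with hμdef
  have hF : MemLp (fun w : α × β × γ => Q w.1) 2 μ :=
    hQ.comp_measurePreserving (aux_mp_fst Pa (Pb.prod Pc))
  have hG : MemLp (fun w : α × β × γ => P w.2.1) 2 μ :=
    (hP.comp_measurePreserving (aux_mp_fst Pb Pc)).comp_measurePreserving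
      (aux_mp_snd Pa (Pb.prod Pc))
  have hH : MemLp (fun w : α × β × γ => R w.2.2) 2 μ :=
    (hR.comp_measurePreserving (aux_mp_snd Pb Pc)).comp_measurePreserving
      (aux_mp_snd Pa (Pb.prod Pc))
  have iF2 : Integrable (fun w : α × β × γ => Q w.1 ^ 2) μ := hF.integrable_sq
  have iG2 : Integrable (fun w : α × β × γ => P w.2.1 ^ 2) μ := hG.integrable_sq
  have iH2 : Integrable (fun w : α × β × γ => R w.2.2 ^ 2) μ := hH.integrable_sq
  have iFG : Integrable (fun w : α × β × γ => Q w.1 * P w.2.1) μ := aux_mul_integrable hF hG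
  have iFH : Integrable (fun w : α × β × γ => Q w.1 * R w.2.2) μ := aux_mul_integrable hF hH
  have iGH : Integrable (fun w : α × β × γ => P w.2.1 * R w.2.2) μ := aux_mul_integrable hG hH
  have hexp : (fun w : α × β × γ => (Q w.1 + P w.2.1 + R w.2.2) ^ 2)
      = fun w => ((((Q w.1 ^ 2 + P w.2.1 ^ 2) + R w.2.2 ^ 2) + 2 * (Q w.1 * P w.2.1))
          + 2 * (Q w.1 * R w.2.2)) + 2 * (P w.2.1 * R w.2.2) := by
    funext w; ring
  have hFG : ∫ w : α × β × γ, Q w.1 * P w.2.1 ∂μ = 0 := by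
    have h : ∫ w : α × β × γ, Q w.1 * P w.2.1 ∂μ
        = (∫ a, Q a ∂Pa) * ∫ p : β × γ, P p.1 ∂(Pb.prod Pc) :=
      integral_prod_mul Q (fun p : β × γ => P p.1)
    rw [h, hQ0, zero_mul]
  have hFH : ∫ w : α × β × γ, Q w.1 * R w.2.2 ∂μ = 0 := by
    have h : ∫ w : α × β × γ, Q w.1 * R w.2.2 ∂μ
        = (∫ a, Q a ∂Pa) * ∫ p : β × γ, R p.2 ∂(Pb.prod Pc) :=
      integral_prod_mul Q (fun p : β × γ => R p.2)
    rw [h, hQ0, zero_mul]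
  have hGH : ∫ w : α × β × γ, P w.2.1 * R w.2.2 ∂μ = 0 := by
    have h1 : ∫ w : α × β × γ, P w.2.1 * R w.2.2 ∂μ
        = ∫ p : β × γ, P p.1 * R p.2 ∂(Pb.prod Pc) :=
      aux_int_snd Pa (Pb.prod Pc) (fun p : β × γ => P p.1 * R p.2)
    have h2 : ∫ p : β × γ, P p.1 * R p.2 ∂(Pb.prod Pc)
        = (∫ b, P b ∂Pb) * ∫ c, R c ∂Pc := integral_prod_mul P R
    rw [h1, h2, hP0, zero_mul]
  have pQ : ∫ w : α × β × γ, Q w.1 ^ 2 ∂μ = ∫ a, Q a ^ 2 ∂Pa :=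
    aux_int_fst Pa (Pb.prod Pc) (fun a => Q a ^ 2)
  have pP : ∫ w : α × β × γ, P w.2.1 ^ 2 ∂μ = ∫ b, P b ^ 2 ∂Pb := by
    have h1 : ∫ w : α × β × γ, P w.2.1 ^ 2 ∂μ
        = ∫ p : β × γ, P p.1 ^ 2 ∂(Pb.prod Pc) :=
      aux_int_snd Pa (Pb.prod Pc) (fun p : β × γ => P p.1 ^ 2)
    rw [h1]; exact aux_int_fst Pb Pc (fun b => P b ^ 2)
  have pR : ∫ w : α × β × γ, R w.2.2 ^ 2 ∂μ = ∫ c, R c ^ 2 ∂Pc := by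
    have h1 : ∫ w : α × β × γ, R w.2.2 ^ 2 ∂μ
        = ∫ p : β × γ, R p.2 ^ 2 ∂(Pb.prod Pc) :=
      aux_int_snd Pa (Pb.prod Pc) (fun p : β × γ => R p.2 ^ 2)
    rw [h1]; exact aux_int_snd Pb Pc (fun c => R c ^ 2)
  have j2 : Integrable (fun w : α × β × γ => Q w.1 ^ 2 + P w.2.1 ^ 2) μ := iF2.add iG2
  have j3 : Integrable (fun w : α × β × γ => Q w.1 ^ 2 + P w.2.1 ^ 2 + R w.2.2 ^ 2) μ :=
    j2.add iH2
  have j4 : Integrable (fun w : α × β × γ =>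
      Q w.1 ^ 2 + P w.2.1 ^ 2 + R w.2.2 ^ 2 + 2 * (Q w.1 * P w.2.1)) μ :=
    j3.add (iFG.const_mul 2)
  have j5 : Integrable (fun w : α × β × γ =>
      Q w.1 ^ 2 + P w.2.1 ^ 2 + R w.2.2 ^ 2 + 2 * (Q w.1 * P w.2.1)
        + 2 * (Q w.1 * R w.2.2)) μ := j4.add (iFH.const_mul 2)
  rw [hexp, integral_add j5 (iGH.const_mul 2), integral_add j4 (iFH.const_mul 2),
      integral_add j3 (iFG.const_mul 2), integral_add j2 iH2, integral_add iF2 iG2,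
      integral_const_mul, integral_const_mul, integral_const_mul,
      hFG, hFH, hGH, pQ, pP, pR]
  ring

end MMDVarAux

/-- **Variance expansion of the first projection of the difference of two MMD
U-statistic kernels** (appendix, Eq. 40). With `(x,y,z) ∼ P_x ⊗ P_y ⊗ P_z` and
`D = (⟪φ(y),μ_y⟫ − ⟪φ(x),μ_y⟫ − ⟪μ_x,φ(y)⟫) − (⟪φ(z),μ_z⟫ − ⟪φ(x),μ_z⟫ − ⟪μ_x,φ(z)⟫)`,
`Var(D)` equals the sum of the six individual variances minus twice the three displayed
covariances. -/
theorem stmt_17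
    {Hb : Type*} [NormedAddCommGroup Hb] [InnerProductSpace ℝ Hb] [CompleteSpace Hb]
    {S : Type*} [MeasurableSpace S]
    (φ : S → Hb) (hφ : StronglyMeasurable φ)
    (Px Py Pz : Measure S)
    [IsProbabilityMeasure Px] [IsProbabilityMeasure Py] [IsProbabilityMeasure Pz]
    (hPx2 : MemLp (fun a => ‖φ a‖) 2 Px) (hPy2 : MemLp (fun a => ‖φ a‖) 2 Py)
    (hPz2 : MemLp (fun a => ‖φ a‖) 2 Pz)
    (μx μy μz : Hb)
    (hμx : μx = ∫ a, φ a ∂Px) (hμy : μy = ∫ a, φ a ∂Py) (hμz : μz = ∫ a, φ a ∂Pz)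
    (μ : Measure (S × S × S)) (hμ : μ = Px.prod (Py.prod Pz))
    (Var : (S × S × S → ℝ) → ℝ)
    (hVar : ∀ f : S × S × S → ℝ, Var f = ∫ w, (f w - ∫ w', f w' ∂μ) ^ 2 ∂μ)
    (Cov : (S × S × S → ℝ) → (S × S × S → ℝ) → ℝ)
    (hCov : ∀ f g : S × S × S → ℝ,
      Cov f g = ∫ w, (f w - ∫ w', f w' ∂μ) * (g w - ∫ w', g w' ∂μ) ∂μ)
    (D : S × S × S → ℝ)
    (hD : ∀ w : S × S × S,
      D w = (⟪φ w.2.1, μy⟫ - ⟪φ w.1, μy⟫ - ⟪μx, φ w.2.1⟫)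
            - (⟪φ w.2.2, μz⟫ - ⟪φ w.1, μz⟫ - ⟪μx, φ w.2.2⟫)) :
    Var D =
      Var (fun w => ⟪φ w.2.1, μy⟫) + Var (fun w => ⟪φ w.1, μy⟫)
        + Var (fun w => ⟪μx, φ w.2.1⟫)
        + Var (fun w => ⟪φ w.2.2, μz⟫) + Var (fun w => ⟪φ w.1, μz⟫)
        + Var (fun w => ⟪μx, φ w.2.2⟫)
        - 2 * Cov (fun w => ⟪φ w.2.1, μy⟫) (fun w => ⟪μx, φ w.2.1⟫)
        - 2 * Cov (fun w => ⟪φ w.1, μy⟫) (fun w => ⟪φ w.1, μz⟫)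
        - 2 * Cov (fun w => ⟪φ w.2.2, μz⟫) (fun w => ⟪μx, φ w.2.2⟫) := by
  subst hμ
  -- marginal square-integrability of the six inner-product functions
  have memAy : MemLp (fun s => ⟪φ s, μy⟫) 2 Py := aux_memLp_inner hφ μy hPy2
  have memAx : MemLp (fun s => ⟪φ s, μy⟫) 2 Px := aux_memLp_inner hφ μy hPx2
  have memBy : MemLp (fun s => ⟪μx, φ s⟫) 2 Py := aux_memLp_inner' hφ μx hPy2
  have memBz : MemLp (fun s => ⟪μx, φ s⟫) 2 Pz := aux_memLp_inner' hφ μx hPz2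
  have memCz : MemLp (fun s => ⟪φ s, μz⟫) 2 Pz := aux_memLp_inner hφ μz hPz2
  have memCx : MemLp (fun s => ⟪φ s, μz⟫) 2 Px := aux_memLp_inner hφ μz hPx2
  have intAy : Integrable (fun s => ⟪φ s, μy⟫) Py := memAy.integrable one_le_two
  have intAx : Integrable (fun s => ⟪φ s, μy⟫) Px := memAx.integrable one_le_two
  have intBy : Integrable (fun s => ⟪μx, φ s⟫) Py := memBy.integrable one_le_two
  have intBz : Integrable (fun s => ⟪μx, φ s⟫) Pz := memBz.integrable one_le_two
  have intCz : Integrable (fun s => ⟪φ s, μz⟫) Pz := memCz.integrable one_le_two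
  have intCx : Integrable (fun s => ⟪φ s, μz⟫) Px := memCx.integrable one_le_two
  -- the six means
  set AY := ∫ t, ⟪φ t, μy⟫ ∂Py with hAY
  set AX := ∫ t, ⟪φ t, μy⟫ ∂Px with hAX
  set BY := ∫ t, ⟪μx, φ t⟫ ∂Py with hBY
  set BZ := ∫ t, ⟪μx, φ t⟫ ∂Pz with hBZ
  set CZ := ∫ t, ⟪φ t, μz⟫ ∂Pz with hCZ
  set CX := ∫ t, ⟪φ t, μz⟫ ∂Px with hCX
  -- pullback integral identities
  have pull1 : ∀ f : S → ℝ,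
      ∫ w : S × S × S, f w.1 ∂(Px.prod (Py.prod Pz)) = ∫ s, f s ∂Px :=
    fun f => aux_int_fst Px (Py.prod Pz) f
  have pull2 : ∀ f : S → ℝ,
      ∫ w : S × S × S, f w.2.1 ∂(Px.prod (Py.prod Pz)) = ∫ s, f s ∂Py := by
    intro f
    have h1 : ∫ w : S × S × S, f w.2.1 ∂(Px.prod (Py.prod Pz))
        = ∫ p : S × S, f p.1 ∂(Py.prod Pz) :=
      aux_int_snd Px (Py.prod Pz) (fun p : S × S => f p.1)
    rw [h1]; exact aux_int_fst Py Pz f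
  have pull3 : ∀ f : S → ℝ,
      ∫ w : S × S × S, f w.2.2 ∂(Px.prod (Py.prod Pz)) = ∫ s, f s ∂Pz := by
    intro f
    have h1 : ∫ w : S × S × S, f w.2.2 ∂(Px.prod (Py.prod Pz))
        = ∫ p : S × S, f p.2 ∂(Py.prod Pz) :=
      aux_int_snd Px (Py.prod Pz) (fun p : S × S => f p.2)
    rw [h1]; exact aux_int_snd Py Pz f
  -- pullback Memℒp
  have memP1 : ∀ f : S → ℝ, MemLp f 2 Px →
      MemLp (fun w : S × S × S => f w.1) 2 (Px.prod (Py.prod Pz)) :=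
    fun f h => h.comp_measurePreserving (aux_mp_fst Px (Py.prod Pz))
  have memP2 : ∀ f : S → ℝ, MemLp f 2 Py →
      MemLp (fun w : S × S × S => f w.2.1) 2 (Px.prod (Py.prod Pz)) :=
    fun f h => (h.comp_measurePreserving (aux_mp_fst Py Pz)).comp_measurePreserving
      (aux_mp_snd Px (Py.prod Pz))
  have memP3 : ∀ f : S → ℝ, MemLp f 2 Pz →
      MemLp (fun w : S × S × S => f w.2.2) 2 (Px.prod (Py.prod Pz)) :=
    fun f h => (h.comp_measurePreserving (aux_mp_snd Py Pz)).comp_measurePreserving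
      (aux_mp_snd Px (Py.prod Pz))
  -- integrable pullbacks
  have iAy : Integrable (fun w : S × S × S => ⟪φ w.2.1, μy⟫) (Px.prod (Py.prod Pz)) :=
    (memP2 _ memAy).integrable one_le_two
  have iAx : Integrable (fun w : S × S × S => ⟪φ w.1, μy⟫) (Px.prod (Py.prod Pz)) :=
    (memP1 _ memAx).integrable one_le_two
  have iBy : Integrable (fun w : S × S × S => ⟪μx, φ w.2.1⟫) (Px.prod (Py.prod Pz)) :=
    (memP2 _ memBy).integrable one_le_two
  have iBz : Integrable (fun w : S × S × S => ⟪μx, φ w.2.2⟫) (Px.prod (Py.prod Pz)) :=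
    (memP3 _ memBz).integrable one_le_two
  have iCz : Integrable (fun w : S × S × S => ⟪φ w.2.2, μz⟫) (Px.prod (Py.prod Pz)) :=
    (memP3 _ memCz).integrable one_le_two
  have iCx : Integrable (fun w : S × S × S => ⟪φ w.1, μz⟫) (Px.prod (Py.prod Pz)) :=
    (memP1 _ memCx).integrable one_le_two
  -- pulled means
  have qAY : ∫ w : S × S × S, ⟪φ w.2.1, μy⟫ ∂(Px.prod (Py.prod Pz)) = AY := by
    rw [hAY]; exact pull2 (fun t => ⟪φ t, μy⟫)
  have qAX : ∫ w : S × S × S, ⟪φ w.1, μy⟫ ∂(Px.prod (Py.prod Pz)) = AX := by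
    rw [hAX]; exact pull1 (fun t => ⟪φ t, μy⟫)
  have qBY : ∫ w : S × S × S, ⟪μx, φ w.2.1⟫ ∂(Px.prod (Py.prod Pz)) = BY := by
    rw [hBY]; exact pull2 (fun t => ⟪μx, φ t⟫)
  have qBZ : ∫ w : S × S × S, ⟪μx, φ w.2.2⟫ ∂(Px.prod (Py.prod Pz)) = BZ := by
    rw [hBZ]; exact pull3 (fun t => ⟪μx, φ t⟫)
  have qCZ : ∫ w : S × S × S, ⟪φ w.2.2, μz⟫ ∂(Px.prod (Py.prod Pz)) = CZ := by
    rw [hCZ]; exact pull3 (fun t => ⟪φ t, μz⟫)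
  have qCX : ∫ w : S × S × S, ⟪φ w.1, μz⟫ ∂(Px.prod (Py.prod Pz)) = CX := by
    rw [hCX]; exact pull1 (fun t => ⟪φ t, μz⟫)
  -- mean of D
  have hmD : ∫ w, D w ∂(Px.prod (Py.prod Pz)) = AY - AX - BY - (CZ - CX - BZ) := by
    have hDeq : D = fun w : S × S × S =>
        (⟪φ w.2.1, μy⟫ - ⟪φ w.1, μy⟫ - ⟪μx, φ w.2.1⟫)
          - (⟪φ w.2.2, μz⟫ - ⟪φ w.1, μz⟫ - ⟪μx, φ w.2.2⟫) := funext hD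
    have g1 : Integrable (fun w : S × S × S => ⟪φ w.2.1, μy⟫ - ⟪φ w.1, μy⟫)
        (Px.prod (Py.prod Pz)) := iAy.sub iAx
    have g1' : Integrable (fun w : S × S × S =>
        ⟪φ w.2.1, μy⟫ - ⟪φ w.1, μy⟫ - ⟪μx, φ w.2.1⟫) (Px.prod (Py.prod Pz)) := g1.sub iBy
    have g2 : Integrable (fun w : S × S × S => ⟪φ w.2.2, μz⟫ - ⟪φ w.1, μz⟫)
        (Px.prod (Py.prod Pz)) := iCz.sub iCx
    have g2' : Integrable (fun w : S × S × S =>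
        ⟪φ w.2.2, μz⟫ - ⟪φ w.1, μz⟫ - ⟪μx, φ w.2.2⟫) (Px.prod (Py.prod Pz)) := g2.sub iBz
    rw [hDeq, integral_sub g1' g2', integral_sub g1 iBy, integral_sub iAy iAx,
        integral_sub g2 iBz, integral_sub iCz iCx, qAY, qAX, qBY, qBZ, qCZ, qCX]
  -- zero-mean of the three centered coordinate functions
  have hQ0 : ∫ s, ((⟪φ s, μz⟫ - CX) - (⟪φ s, μy⟫ - AX)) ∂Px = 0 := by
    rw [hCX, hAX]; exact aux_centered intCx intAx
  have hP0 : ∫ s, ((⟪φ s, μy⟫ - AY) - (⟪μx, φ s⟫ - BY)) ∂Py = 0 := by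
    rw [hAY, hBY]; exact aux_centered intAy intBy
  have hR0 : ∫ s, ((⟪μx, φ s⟫ - BZ) - (⟪φ s, μz⟫ - CZ)) ∂Pz = 0 := by
    rw [hBZ, hCZ]; exact aux_centered intBz intCz
  -- Memℒp of the centered coordinate functions
  have memQ : MemLp (fun s => (⟪φ s, μz⟫ - CX) - (⟪φ s, μy⟫ - AX)) 2 Px :=
    (memCx.sub (memLp_const CX)).sub (memAx.sub (memLp_const AX))
  have memP : MemLp (fun s => (⟪φ s, μy⟫ - AY) - (⟪μx, φ s⟫ - BY)) 2 Py :=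
    (memAy.sub (memLp_const AY)).sub (memBy.sub (memLp_const BY))
  have memR : MemLp (fun s => (⟪μx, φ s⟫ - BZ) - (⟪φ s, μz⟫ - CZ)) 2 Pz :=
    (memBz.sub (memLp_const BZ)).sub (memCz.sub (memLp_const CZ))
  -- LHS reduction
  have hL : Var D
      = ∫ s, ((⟪φ s, μz⟫ - CX) - (⟪φ s, μy⟫ - AX)) ^ 2 ∂Px
        + ∫ s, ((⟪φ s, μy⟫ - AY) - (⟪μx, φ s⟫ - BY)) ^ 2 ∂Py
        + ∫ s, ((⟪μx, φ s⟫ - BZ) - (⟪φ s, μz⟫ - CZ)) ^ 2 ∂Pz := by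
    rw [hVar D, hmD]
    have hcong : (fun w : S × S × S => (D w - (AY - AX - BY - (CZ - CX - BZ))) ^ 2)
        = fun w => (((⟪φ w.1, μz⟫ - CX) - (⟪φ w.1, μy⟫ - AX))
            + ((⟪φ w.2.1, μy⟫ - AY) - (⟪μx, φ w.2.1⟫ - BY))
            + ((⟪μx, φ w.2.2⟫ - BZ) - (⟪φ w.2.2, μz⟫ - CZ))) ^ 2 := by
      funext w; rw [hD w]; ring
    rw [hcong]
    exact aux_sq_sum Px Py Pz _ _ _ memQ memP memR hQ0 hP0 hR0
  -- RHS variance reductions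
  have v1 : Var (fun w : S × S × S => ⟪φ w.2.1, μy⟫) = ∫ s, (⟪φ s, μy⟫ - AY) ^ 2 ∂Py :=
    calc Var (fun w : S × S × S => ⟪φ w.2.1, μy⟫)
        = ∫ w, (⟪φ w.2.1, μy⟫ - ∫ w' : S × S × S, ⟪φ w'.2.1, μy⟫ ∂(Px.prod (Py.prod Pz))) ^ 2
            ∂(Px.prod (Py.prod Pz)) := hVar _
      _ = ∫ w, (⟪φ w.2.1, μy⟫ - AY) ^ 2 ∂(Px.prod (Py.prod Pz)) := by rw [qAY]
      _ = ∫ s, (⟪φ s, μy⟫ - AY) ^ 2 ∂Py := pull2 (fun s => (⟪φ s, μy⟫ - AY) ^ 2)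
  have v2 : Var (fun w : S × S × S => ⟪φ w.1, μy⟫) = ∫ s, (⟪φ s, μy⟫ - AX) ^ 2 ∂Px :=
    calc Var (fun w : S × S × S => ⟪φ w.1, μy⟫)
        = ∫ w, (⟪φ w.1, μy⟫ - ∫ w' : S × S × S, ⟪φ w'.1, μy⟫ ∂(Px.prod (Py.prod Pz))) ^ 2
            ∂(Px.prod (Py.prod Pz)) := hVar _
      _ = ∫ w, (⟪φ w.1, μy⟫ - AX) ^ 2 ∂(Px.prod (Py.prod Pz)) := by rw [qAX]
      _ = ∫ s, (⟪φ s, μy⟫ - AX) ^ 2 ∂Px := pull1 (fun s => (⟪φ s, μy⟫ - AX) ^ 2)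
  have v3 : Var (fun w : S × S × S => ⟪μx, φ w.2.1⟫) = ∫ s, (⟪μx, φ s⟫ - BY) ^ 2 ∂Py :=
    calc Var (fun w : S × S × S => ⟪μx, φ w.2.1⟫)
        = ∫ w, (⟪μx, φ w.2.1⟫ - ∫ w' : S × S × S, ⟪μx, φ w'.2.1⟫ ∂(Px.prod (Py.prod Pz))) ^ 2
            ∂(Px.prod (Py.prod Pz)) := hVar _
      _ = ∫ w, (⟪μx, φ w.2.1⟫ - BY) ^ 2 ∂(Px.prod (Py.prod Pz)) := by rw [qBY]
      _ = ∫ s, (⟪μx, φ s⟫ - BY) ^ 2 ∂Py := pull2 (fun s => (⟪μx, φ s⟫ - BY) ^ 2)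
  have v4 : Var (fun w : S × S × S => ⟪φ w.2.2, μz⟫) = ∫ s, (⟪φ s, μz⟫ - CZ) ^ 2 ∂Pz :=
    calc Var (fun w : S × S × S => ⟪φ w.2.2, μz⟫)
        = ∫ w, (⟪φ w.2.2, μz⟫ - ∫ w' : S × S × S, ⟪φ w'.2.2, μz⟫ ∂(Px.prod (Py.prod Pz))) ^ 2
            ∂(Px.prod (Py.prod Pz)) := hVar _
      _ = ∫ w, (⟪φ w.2.2, μz⟫ - CZ) ^ 2 ∂(Px.prod (Py.prod Pz)) := by rw [qCZ]
      _ = ∫ s, (⟪φ s, μz⟫ - CZ) ^ 2 ∂Pz := pull3 (fun s => (⟪φ s, μz⟫ - CZ) ^ 2)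
  have v5 : Var (fun w : S × S × S => ⟪φ w.1, μz⟫) = ∫ s, (⟪φ s, μz⟫ - CX) ^ 2 ∂Px :=
    calc Var (fun w : S × S × S => ⟪φ w.1, μz⟫)
        = ∫ w, (⟪φ w.1, μz⟫ - ∫ w' : S × S × S, ⟪φ w'.1, μz⟫ ∂(Px.prod (Py.prod Pz))) ^ 2
            ∂(Px.prod (Py.prod Pz)) := hVar _
      _ = ∫ w, (⟪φ w.1, μz⟫ - CX) ^ 2 ∂(Px.prod (Py.prod Pz)) := by rw [qCX]
      _ = ∫ s, (⟪φ s, μz⟫ - CX) ^ 2 ∂Px := pull1 (fun s => (⟪φ s, μz⟫ - CX) ^ 2)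
  have v6 : Var (fun w : S × S × S => ⟪μx, φ w.2.2⟫) = ∫ s, (⟪μx, φ s⟫ - BZ) ^ 2 ∂Pz :=
    calc Var (fun w : S × S × S => ⟪μx, φ w.2.2⟫)
        = ∫ w, (⟪μx, φ w.2.2⟫ - ∫ w' : S × S × S, ⟪μx, φ w'.2.2⟫ ∂(Px.prod (Py.prod Pz))) ^ 2
            ∂(Px.prod (Py.prod Pz)) := hVar _
      _ = ∫ w, (⟪μx, φ w.2.2⟫ - BZ) ^ 2 ∂(Px.prod (Py.prod Pz)) := by rw [qBZ]
      _ = ∫ s, (⟪μx, φ s⟫ - BZ) ^ 2 ∂Pz := pull3 (fun s => (⟪μx, φ s⟫ - BZ) ^ 2)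
  -- RHS covariance reductions
  have c1 : Cov (fun w : S × S × S => ⟪φ w.2.1, μy⟫) (fun w => ⟪μx, φ w.2.1⟫)
      = ∫ s, (⟪φ s, μy⟫ - AY) * (⟪μx, φ s⟫ - BY) ∂Py :=
    calc Cov (fun w : S × S × S => ⟪φ w.2.1, μy⟫) (fun w => ⟪μx, φ w.2.1⟫)
        = ∫ w, (⟪φ w.2.1, μy⟫ - ∫ w' : S × S × S, ⟪φ w'.2.1, μy⟫ ∂(Px.prod (Py.prod Pz)))
            * (⟪μx, φ w.2.1⟫ - ∫ w' : S × S × S, ⟪μx, φ w'.2.1⟫ ∂(Px.prod (Py.prod Pz)))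
            ∂(Px.prod (Py.prod Pz)) := hCov _ _
      _ = ∫ w, (⟪φ w.2.1, μy⟫ - AY) * (⟪μx, φ w.2.1⟫ - BY) ∂(Px.prod (Py.prod Pz)) := by
          rw [qAY, qBY]
      _ = ∫ s, (⟪φ s, μy⟫ - AY) * (⟪μx, φ s⟫ - BY) ∂Py :=
          pull2 (fun s => (⟪φ s, μy⟫ - AY) * (⟪μx, φ s⟫ - BY))
  have c2 : Cov (fun w : S × S × S => ⟪φ w.1, μy⟫) (fun w => ⟪φ w.1, μz⟫)
      = ∫ s, (⟪φ s, μy⟫ - AX) * (⟪φ s, μz⟫ - CX) ∂Px :=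
    calc Cov (fun w : S × S × S => ⟪φ w.1, μy⟫) (fun w => ⟪φ w.1, μz⟫)
        = ∫ w, (⟪φ w.1, μy⟫ - ∫ w' : S × S × S, ⟪φ w'.1, μy⟫ ∂(Px.prod (Py.prod Pz)))
            * (⟪φ w.1, μz⟫ - ∫ w' : S × S × S, ⟪φ w'.1, μz⟫ ∂(Px.prod (Py.prod Pz)))
            ∂(Px.prod (Py.prod Pz)) := hCov _ _
      _ = ∫ w, (⟪φ w.1, μy⟫ - AX) * (⟪φ w.1, μz⟫ - CX) ∂(Px.prod (Py.prod Pz)) := by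
          rw [qAX, qCX]
      _ = ∫ s, (⟪φ s, μy⟫ - AX) * (⟪φ s, μz⟫ - CX) ∂Px :=
          pull1 (fun s => (⟪φ s, μy⟫ - AX) * (⟪φ s, μz⟫ - CX))
  have c3 : Cov (fun w : S × S × S => ⟪φ w.2.2, μz⟫) (fun w => ⟪μx, φ w.2.2⟫)
      = ∫ s, (⟪φ s, μz⟫ - CZ) * (⟪μx, φ s⟫ - BZ) ∂Pz :=
    calc Cov (fun w : S × S × S => ⟪φ w.2.2, μz⟫) (fun w => ⟪μx, φ w.2.2⟫)
        = ∫ w, (⟪φ w.2.2, μz⟫ - ∫ w' : S × S × S, ⟪φ w'.2.2, μz⟫ ∂(Px.prod (Py.prod Pz)))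
            * (⟪μx, φ w.2.2⟫ - ∫ w' : S × S × S, ⟪μx, φ w'.2.2⟫ ∂(Px.prod (Py.prod Pz)))
            ∂(Px.prod (Py.prod Pz)) := hCov _ _
      _ = ∫ w, (⟪φ w.2.2, μz⟫ - CZ) * (⟪μx, φ w.2.2⟫ - BZ) ∂(Px.prod (Py.prod Pz)) := by
          rw [qCZ, qBZ]
      _ = ∫ s, (⟪φ s, μz⟫ - CZ) * (⟪μx, φ s⟫ - BZ) ∂Pz :=
          pull3 (fun s => (⟪φ s, μz⟫ - CZ) * (⟪μx, φ s⟫ - BZ))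
  -- expansions of the three squared differences
  have e1 : ∫ s, ((⟪φ s, μz⟫ - CX) - (⟪φ s, μy⟫ - AX)) ^ 2 ∂Px
      = ∫ s, (⟪φ s, μz⟫ - CX) ^ 2 ∂Px + ∫ s, (⟪φ s, μy⟫ - AX) ^ 2 ∂Px
        - 2 * ∫ s, (⟪φ s, μz⟫ - CX) * (⟪φ s, μy⟫ - AX) ∂Px :=
    aux_sub_sq _ _ (memCx.sub (memLp_const CX)) (memAx.sub (memLp_const AX))
  have e2 : ∫ s, ((⟪φ s, μy⟫ - AY) - (⟪μx, φ s⟫ - BY)) ^ 2 ∂Py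
      = ∫ s, (⟪φ s, μy⟫ - AY) ^ 2 ∂Py + ∫ s, (⟪μx, φ s⟫ - BY) ^ 2 ∂Py
        - 2 * ∫ s, (⟪φ s, μy⟫ - AY) * (⟪μx, φ s⟫ - BY) ∂Py :=
    aux_sub_sq _ _ (memAy.sub (memLp_const AY)) (memBy.sub (memLp_const BY))
  have e3 : ∫ s, ((⟪μx, φ s⟫ - BZ) - (⟪φ s, μz⟫ - CZ)) ^ 2 ∂Pz
      = ∫ s, (⟪μx, φ s⟫ - BZ) ^ 2 ∂Pz + ∫ s, (⟪φ s, μz⟫ - CZ) ^ 2 ∂Pz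
        - 2 * ∫ s, (⟪μx, φ s⟫ - BZ) * (⟪φ s, μz⟫ - CZ) ∂Pz :=
    aux_sub_sq _ _ (memBz.sub (memLp_const BZ)) (memCz.sub (memLp_const CZ))
  -- reorder the two flipped products
  have f1 : ∫ s, (⟪φ s, μz⟫ - CX) * (⟪φ s, μy⟫ - AX) ∂Px
      = ∫ s, (⟪φ s, μy⟫ - AX) * (⟪φ s, μz⟫ - CX) ∂Px :=
    integral_congr_ae (ae_of_all _ fun s => mul_comm _ _)
  have f2 : ∫ s, (⟪μx, φ s⟫ - BZ) * (⟪φ s, μz⟫ - CZ) ∂Pz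
      = ∫ s, (⟪φ s, μz⟫ - CZ) * (⟪μx, φ s⟫ - BZ) ∂Pz :=
    integral_congr_ae (ae_of_all _ fun s => mul_comm _ _)
  rw [hL, e1, e2, e3, f1, f2, v1, v2, v3, v4, v5, v6, c1, c2, c3]
  ring
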